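/- Let w₋₂, w₋₁, w₀, w₁ be strictly positive real numbers. Let p be the complex cubic polynomial p(X) = w₋₂·X³ + w₋₁·X² + w₀·X + w₁, and assume p has no root of modulus exactly 1. If w₀ + w₋₂ < w₋₁ + w₁, then the number of roots of p (counted with multiplicity) lying in the open unit disk {ζ ∈ ℂ : |ζ| < 1} is either 0 or 2. -/

import Mathlib

open Polynomial

private lemma aux_dup (z : ℂ) (hz : z.im ≠ 0) (u : ℂ) (hu : u = z ∨ u = (starRingEnd ℂ) z)
    (h : (z * ((starRingEnd ℂ) z * u)).im = 0) : False := by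
  have hz0 : z ≠ 0 := fun h' => hz (by rw [h']; simp)
  have hN : 0 < Complex.normSq z := Complex.normSq_pos.2 hz0
  rcases hu with h'|h'
  · rw [h', show z * ((starRingEnd ℂ) z * z) = (Complex.normSq z : ℂ) * z from by
      rw [← Complex.mul_conj]; ring] at h
    rw [show ((Complex.normSq z : ℂ) * z).im = Complex.normSq z * z.im from by
      simp [Complex.mul_im]] at h
    rcases mul_eq_zero.mp h with h''|h''
    · exact hN.ne' h''
    · exact hz h''
  · rw [h', show z * ((starRingEnd ℂ) z * (starRingEnd ℂ) z)
        = (Complex.normSq z : ℂ) * (starRingEnd ℂ) z from by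
      rw [← Complex.mul_conj]; ring] at h
    rw [show ((Complex.normSq z : ℂ) * (starRingEnd ℂ) z).im = Complex.normSq z * (-z.im) from by
      simp [Complex.mul_im]] at h
    rcases mul_eq_zero.mp h with h''|h''
    · exact hN.ne' h''
    · exact hz (by linarith)

open Polynomial

private lemma aux_real (wm2 : ℝ) (hm2 : 0 < wm2) (K : ℝ) (hK : 0 < K) (α β γ : ℝ)
    (hα : α < 0) (hβ : β < 0) (hγ : γ < 0)
    (hα1 : |α| ≠ 1) (hβ1 : |β| ≠ 1) (hγ1 : |γ| ≠ 1)
    (hkey : wm2 * (-1-α) * ((-1-β)*(-1-γ)) = K) :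
    ((if |α| < 1 then 1 else 0) + ((if |β| < 1 then 1 else 0) + (if |γ| < 1 then 1 else 0)) = 0 ∨
     (if |α| < 1 then 1 else 0) + ((if |β| < 1 then 1 else 0) + (if |γ| < 1 then 1 else 0)) = 2) := by
  have ha' : (1:ℝ)+α ≠ 0 := by intro h; apply hα1; rw [abs_of_neg hα]; linarith
  have hb' : (1:ℝ)+β ≠ 0 := by intro h; apply hβ1; rw [abs_of_neg hβ]; linarith
  have hc' : (1:ℝ)+γ ≠ 0 := by intro h; apply hγ1; rw [abs_of_neg hγ]; linarith
  have eα : (|α| < 1) ↔ 0 < 1+α := by rw [abs_of_neg hα]; constructor <;> intro <;> linarith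
  have eβ : (|β| < 1) ↔ 0 < 1+β := by rw [abs_of_neg hβ]; constructor <;> intro <;> linarith
  have eγ : (|γ| < 1) ↔ 0 < 1+γ := by rw [abs_of_neg hγ]; constructor <;> intro <;> linarith
  have hP : 0 < (-1-α) * ((-1-β)*(-1-γ)) := by
    by_contra h
    push_neg at h
    nlinarith [mul_nonpos_of_nonneg_of_nonpos hm2.le h]
  simp only [eα, eβ, eγ]
  by_cases H1 : 0 < 1+α
  · by_cases H2 : 0 < 1+β
    · by_cases H3 : 0 < 1+γ
      · exfalso; nlinarith [mul_pos H1 (mul_pos H2 H3)]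
      · right; rw [if_pos H1, if_pos H2, if_neg H3]
    · have H2' : 1+β < 0 := lt_of_le_of_ne (not_lt.1 H2) hb'
      by_cases H3 : 0 < 1+γ
      · right; rw [if_pos H1, if_neg (by linarith), if_pos H3]
      · have H3' : 1+γ < 0 := lt_of_le_of_ne (not_lt.1 H3) hc'
        exfalso
        have h2 : 0 < -(1+β) := by linarith
        have h3 : 0 < -(1+γ) := by linarith
        nlinarith [mul_pos H1 (mul_pos h2 h3)]
  · have H1' : 1+α < 0 := lt_of_le_of_ne (not_lt.1 H1) ha'
    have h1 : 0 < -(1+α) := by linarith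
    by_cases H2 : 0 < 1+β
    · by_cases H3 : 0 < 1+γ
      · right; rw [if_neg H1, if_pos H2, if_pos H3]
      · have H3' : 1+γ < 0 := lt_of_le_of_ne (not_lt.1 H3) hc'
        exfalso
        have h3 : 0 < -(1+γ) := by linarith
        nlinarith [mul_pos h1 (mul_pos H2 h3)]
    · have H2' : 1+β < 0 := lt_of_le_of_ne (not_lt.1 H2) hb'
      have h2 : 0 < -(1+β) := by linarith
      by_cases H3 : 0 < 1+γ
      · exfalso
        nlinarith [mul_pos h1 (mul_pos h2 H3)]
      · left; rw [if_neg H1, if_neg H2, if_neg H3]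


private lemma aux_pair (wm2 : ℝ) (hm2 : 0 < wm2) (K : ℝ) (hK : 0 < K) (a z : ℂ)
    (ha : a.im = 0) (hz : z.im ≠ 0)
    (hkey : (wm2:ℂ) * (-1-a) * ((-1-z)*(-1-(starRingEnd ℂ) z)) = (K:ℂ)) :
    (Multiset.card (({a, z, (starRingEnd ℂ) z} : Multiset ℂ).filter fun ζ => ‖ζ‖ < 1) = 0 ∨
     Multiset.card (({a, z, (starRingEnd ℂ) z} : Multiset ℂ).filter fun ζ => ‖ζ‖ < 1) = 2) := by
  have haz : a = (a.re : ℂ) := by apply Complex.ext <;> simp [ha]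
  have h1z : (1 : ℂ) + z ≠ 0 := by
    intro h
    have : ((1:ℂ)+z).im = 0 := by rw [h]; simp
    simp at this; exact hz this
  have hN : 0 < Complex.normSq (1+z) := Complex.normSq_pos.2 h1z
  have hprod : (-1-z)*(-1-(starRingEnd ℂ) z) = (Complex.normSq (1+z) : ℂ) := by
    rw [← Complex.mul_conj (1+z)]
    simp only [map_add, map_one]
    ring
  rw [hprod, haz] at hkey
  have hkeyR : wm2 * (-1-a.re) * Complex.normSq (1+z) = K := by exact_mod_cast hkey
  have hare : a.re < -1 := by
    by_contra h
    push_neg at h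
    have h2 : wm2 * (-1-a.re) ≤ 0 := mul_nonpos_of_nonneg_of_nonpos hm2.le (by linarith)
    nlinarith [mul_nonpos_of_nonpos_of_nonneg h2 hN.le]
  have hnota : ¬ ‖a‖ < 1 := by
    rw [haz, Complex.norm_real, Real.norm_eq_abs, abs_of_neg (by linarith : a.re < 0)]
    linarith
  have habsconj : ‖(starRingEnd ℂ) z‖ = ‖z‖ := Complex.norm_conj z
  have hcount : Multiset.card (({a, z, (starRingEnd ℂ) z} : Multiset ℂ).filter fun ζ => ‖ζ‖ < 1) =
      (if ‖a‖ < 1 then 1 else 0) + ((if ‖z‖ < 1 then 1 else 0)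
        + (if ‖(starRingEnd ℂ) z‖ < 1 then 1 else 0)) := by
    simp [Multiset.filter_cons, Multiset.filter_singleton, apply_ite Multiset.card]
  rw [hcount, habsconj, if_neg hnota]
  by_cases hB : ‖z‖ < 1
  · right; rw [if_pos hB]
  · left; rw [if_neg hB]



/-- **The `|γ| = 1` row of Table S1.** For positive hoppings `w₋₂, w₋₁, w₀, w₁`,
if the cubic `p(X) = w₋₂ X³ + w₋₁ X² + w₀ X + w₁` has no root on the unit circle
and `w₀ + w₋₂ < w₋₁ + w₁`, then the number of roots of `p` (with multiplicity)
in the open unit disk is `0` or `2`. -/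
theorem winding_one_root_count
    (wm2 wm1 w0 w1 : ℝ)
    (hm2 : 0 < wm2) (hm1 : 0 < wm1) (h0 : 0 < w0) (h1 : 0 < w1)
    (p : Polynomial ℂ)
    (hp : p = C (wm2 : ℂ) * X ^ 3 + C (wm1 : ℂ) * X ^ 2 + C (w0 : ℂ) * X + C (w1 : ℂ))
    (hcirc : ∀ ζ : ℂ, p.IsRoot ζ → ‖ζ‖ ≠ 1)
    (hC2 : w0 + wm2 < wm1 + w1) :
    Multiset.card (p.roots.filter fun ζ => ‖ζ‖ < 1) = 0 ∨
    Multiset.card (p.roots.filter fun ζ => ‖ζ‖ < 1) = 2 := by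
  set K : ℝ := wm1 + w1 - w0 - wm2 with hKdef
  have hK : 0 < K := by simp [hKdef]; linarith
  have heval : ∀ z : ℂ, p.eval z = wm2*z^3 + wm1*z^2 + w0*z + w1 := by
    intro z; simp [hp]
  have hpne : p ≠ 0 := by
    intro h
    have := heval 0
    rw [h] at this
    simp at this
    exact h1.ne' (by exact_mod_cast this.symm)
  have hdeg : p.natDegree = 3 := by
    rw [hp]; compute_degree!
    exact_mod_cast hm2.ne'
  have hcard : Multiset.card p.roots = 3 := by
    rw [← hdeg]; exact Polynomial.splits_iff_card_roots.mp (IsAlgClosed.splits p)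
  obtain ⟨a, b, c, habc⟩ := Multiset.card_eq_three.mp hcard
  have hlead : p.leadingCoeff = (wm2 : ℂ) := by
    rw [Polynomial.leadingCoeff, hdeg, hp]
    simp [coeff_X_pow, coeff_C]
  have hfacp := Polynomial.C_leadingCoeff_mul_prod_multiset_X_sub_C (p := p) (by rw [hcard, hdeg])
  rw [hlead, habc] at hfacp
  have hfac : ∀ z : ℂ, p.eval z = wm2 * (z - a) * ((z - b) * (z - c)) := by
    intro z
    rw [← hfacp]
    simp [Multiset.prod_cons]
    ring
  have hroota : p.eval a = 0 := by rw [hfac]; ring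
  have hrootb : p.eval b = 0 := by rw [hfac]; ring
  have hrootc : p.eval c = 0 := by rw [hfac]; ring
  have hconjroot : ∀ z : ℂ, p.eval z = 0 → p.eval ((starRingEnd ℂ) z) = 0 := by
    intro z hze
    have : p.eval ((starRingEnd ℂ) z) = (starRingEnd ℂ) (p.eval z) := by
      simp [heval, map_add, map_mul, map_pow, Complex.conj_ofReal]
    rw [this, hze, map_zero]
  have hmem : ∀ z : ℂ, p.eval z = 0 → z = a ∨ z = b ∨ z = c := by
    intro z hze
    have : z ∈ p.roots := by
      rw [Polynomial.mem_roots hpne]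
      exact hze
    rw [habc] at this
    simpa using this
  have hneg : ∀ z : ℂ, p.eval z = 0 → z.im = 0 → z.re < 0 := by
    intro z hze him
    have hzr : z = (z.re : ℂ) := by apply Complex.ext <;> simp [him]
    rw [heval, hzr] at hze
    have hre : wm2*z.re^3 + wm1*z.re^2 + w0*z.re + w1 = 0 := by exact_mod_cast hze
    by_contra h
    push_neg at h
    nlinarith [mul_nonneg hm2.le (pow_nonneg h 3), mul_nonneg hm1.le (sq_nonneg z.re),
      mul_nonneg h0.le h]
  have habs : ∀ z : ℂ, p.eval z = 0 → ‖z‖ ≠ 1 := fun z hze => hcirc z hze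
  have hkeym : (wm2:ℂ) * (-1-a) * ((-1-b)*(-1-c)) = (K:ℂ) := by
    have h2 := heval (-1)
    rw [hfac (-1)] at h2
    have h3 : ((-1:ℂ) - a) = (-1-a) := rfl
    calc (wm2:ℂ) * (-1-a) * ((-1-b)*(-1-c)) = wm2*(-1:ℂ)^3 + wm1*(-1:ℂ)^2 + w0*(-1) + w1 := by
          linear_combination h2
      _ = (K:ℂ) := by rw [hKdef]; push_cast; ring
  rw [habc]
  -- helper: a root whose conjugate is real-valued forces its imaginary part to vanish
  have himeq : ∀ z w : ℂ, (starRingEnd ℂ) z = w → z.im = -w.im := by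
    intro z w h
    have h2 := congrArg Complex.im h
    simp only [Complex.conj_im] at h2
    linarith
  by_cases ha : a.im = 0
  · by_cases hb : b.im = 0
    · by_cases hc : c.im = 0
      · -- all three roots real
        have hA : a = (a.re : ℂ) := by apply Complex.ext <;> simp [ha]
        have hB : b = (b.re : ℂ) := by apply Complex.ext <;> simp [hb]
        have hC : c = (c.re : ℂ) := by apply Complex.ext <;> simp [hc]
        have hkeyR : wm2 * (-1-a.re) * ((-1-b.re)*(-1-c.re)) = K := by
          rw [hA, hB, hC] at hkeym
          exact_mod_cast hkeym
        have hcount : Multiset.card (({a,b,c} : Multiset ℂ).filter fun ζ => ‖ζ‖ < 1) =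
            (if |a.re| < 1 then 1 else 0) + ((if |b.re| < 1 then 1 else 0) + (if |c.re| < 1 then 1 else 0)) := by
          rw [hA, hB, hC]
          simp [Multiset.filter_cons, Multiset.filter_singleton, apply_ite Multiset.card,
            Complex.norm_real, Real.norm_eq_abs]
        rw [hcount]
        exact aux_real wm2 hm2 K hK a.re b.re c.re
          (hneg a hroota ha) (hneg b hrootb hb) (hneg c hrootc hc)
          (by have h := habs a hroota; rwa [hA, Complex.norm_real, Real.norm_eq_abs] at h)
          (by have h := habs b hrootb; rwa [hB, Complex.norm_real, Real.norm_eq_abs] at h)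
          (by have h := habs c hrootc; rwa [hC, Complex.norm_real, Real.norm_eq_abs] at h)
          hkeyR
      · -- a,b real, c not real : impossible
        exfalso
        rcases hmem _ (hconjroot c hrootc) with h|h|h
        · exact hc (by have := himeq c a h; rw [ha] at this; simpa using this)
        · exact hc (by have := himeq c b h; rw [hb] at this; simpa using this)
        · exact hc (by have := himeq c c h; linarith)
    · by_cases hc : c.im = 0
      · -- a,c real, b not real : impossible
        exfalso
        rcases hmem _ (hconjroot b hrootb) with h|h|h
        · exact hb (by have := himeq b a h; rw [ha] at this; simpa using this)
        · exact hb (by have := himeq b b h; linarith)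
        · exact hb (by have := himeq b c h; rw [hc] at this; simpa using this)
      · -- a real, b and c not real : c = conj b
        have hcb : (starRingEnd ℂ) b = c := by
          rcases hmem _ (hconjroot b hrootb) with h|h|h
          · exact absurd (by have := himeq b a h; rw [ha] at this; simpa using this) hb
          · exact absurd (by have := himeq b b h; linarith) hb
          · exact h
        rw [show ({a,b,c} : Multiset ℂ) = {a, b, (starRingEnd ℂ) b} from by rw [hcb]]
        exact aux_pair wm2 hm2 K hK a b ha hb (by rw [hcb]; exact hkeym)
  · by_cases hb : b.im = 0
    · by_cases hc : c.im = 0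
      · -- b,c real, a not real : impossible
        exfalso
        rcases hmem _ (hconjroot a hroota) with h|h|h
        · exact ha (by have := himeq a a h; linarith)
        · exact ha (by have := himeq a b h; rw [hb] at this; simpa using this)
        · exact ha (by have := himeq a c h; rw [hc] at this; simpa using this)
      · -- b real, a and c not real : c = conj a
        have hca : (starRingEnd ℂ) a = c := by
          rcases hmem _ (hconjroot a hroota) with h|h|h
          · exact absurd (by have := himeq a a h; linarith) ha
          · exact absurd (by have := himeq a b h; rw [hb] at this; simpa using this) ha
          · exact h
        rw [show ({a,b,c} : Multiset ℂ) = {b, a, (starRingEnd ℂ) a} from by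
          rw [hca]; exact Multiset.cons_swap a b _]
        exact aux_pair wm2 hm2 K hK b a hb ha (by rw [hca]; linear_combination hkeym)
    · by_cases hc : c.im = 0
      · -- c real, a and b not real : b = conj a
        have hba : (starRingEnd ℂ) a = b := by
          rcases hmem _ (hconjroot a hroota) with h|h|h
          · exact absurd (by have := himeq a a h; linarith) ha
          · exact h
          · exact absurd (by have := himeq a c h; rw [hc] at this; simpa using this) ha
        rw [show ({a,b,c} : Multiset ℂ) = {c, a, (starRingEnd ℂ) a} from by
          rw [hba]
          have h1 : ({a, b, c} : Multiset ℂ) = {a, c, b} :=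
            congrArg (a ::ₘ ·) (Multiset.cons_swap _ _ {})
          rw [h1]; exact Multiset.cons_swap a c _]
        exact aux_pair wm2 hm2 K hK c a hc ha (by rw [hba]; linear_combination hkeym)
      · -- no root is real : impossible
        exfalso
        have h0eq : (wm2:ℂ) * (a*(b*c)) = -(w1:ℂ) := by
          have h2 := (hfac 0).symm.trans (heval 0)
          linear_combination -h2
        have habcim : (a*(b*c)).im = 0 := by
          have h3 := congrArg Complex.im h0eq
          rw [show ((wm2:ℂ) * (a*(b*c))).im = wm2 * (a*(b*c)).im from by
              simp [Complex.mul_im],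
            show (-(w1:ℂ)).im = 0 from by simp] at h3
          exact (mul_eq_zero.mp h3).resolve_left (by exact_mod_cast hm2.ne')
        rcases hmem _ (hconjroot a hroota) with h|h|h
        · exact ha (by have := himeq a a h; linarith)
        · -- b = conj a
          have hu : c = a ∨ c = (starRingEnd ℂ) a := by
            rcases hmem _ (hconjroot c hrootc) with h2|h2|h2
            · right
              have h3 := congrArg (starRingEnd ℂ) h2
              rwa [Complex.conj_conj] at h3
            · left
              have h3 := congrArg (starRingEnd ℂ) h2
              rw [Complex.conj_conj] at h3
              rw [h3, ← h, Complex.conj_conj]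
            · exact absurd (by have := himeq c c h2; linarith) hc
          rw [← h] at habcim
          exact aux_dup a ha c hu habcim
        · -- c = conj a
          have hu : b = a ∨ b = (starRingEnd ℂ) a := by
            rcases hmem _ (hconjroot b hrootb) with h2|h2|h2
            · right
              have h3 := congrArg (starRingEnd ℂ) h2
              rwa [Complex.conj_conj] at h3
            · exact absurd (by have := himeq b b h2; linarith) hb
            · left
              have h3 := congrArg (starRingEnd ℂ) h2
              rw [Complex.conj_conj] at h3
              rw [h3, ← h, Complex.conj_conj]
          rw [← h, show a * (b * (starRingEnd ℂ) a) = a * ((starRingEnd ℂ) a * b) from by ring] at habcim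
          exact aux_dup a ha b hu habcim
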